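/- Define the population log-likelihood L(ν_1,…,ν_C) = E_x[ log( (1/C) Σ_{i=1}^C exp(−½‖x−ν_i‖²_{Σ⁻¹}) ) ], where the expectation is over x drawn from the equal-weight Gaussian mixture with true means μ_1,…,μ_C and covariance Σ = σ²I_d. Then for each i ∈ [C], the d×d Hessian block ∇²_{ν_i} L, evaluated at the true means (ν_1,…,ν_C) = (μ_1,…,μ_C), is negative definite: for every nonzero u ∈ ℝ^d, uᵀ (∇²_{ν_i} L)(μ_1,…,μ_C) u < 0. -/

import Mathlib

/-!
Statement 4: the Hessian block ∇²_{ν_i} L of the population log-likelihood,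
evaluated at the true means, is negative definite (Lemma 2 of the paper).
The quadratic form uᵀ(∇²_{ν_i}L)u is rendered as the second derivative at 0 of
s ↦ L(μ with its i-th mean replaced by μ_i + s·u).
-/

open MeasureTheory Real Finset
open scoped ENNReal

noncomputable section

abbrev E (d : ℕ) := EuclideanSpace ℝ (Fin d)

/-- density of N(ν, σ²I_d) w.r.t. Lebesgue measure on ℝ^d -/
def gaussPdf (d : ℕ) (σ : ℝ) (ν x : E d) : ℝ :=
  (2 * π * σ ^ 2) ^ (-(d : ℝ) / 2) * Real.exp (-‖x - ν‖ ^ 2 / (2 * σ ^ 2))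

/-- equal-weight Gaussian mixture with means μ i and covariance σ²I -/
def mixture (d C : ℕ) (σ : ℝ) (μ : Fin C → E d) : Measure (E d) :=
  volume.withDensity fun x => ENNReal.ofReal ((1 / C : ℝ) * ∑ i : Fin C, gaussPdf d σ (μ i) x)

/-- population log-likelihood L(ν) = E_x[log((1/C) Σ_i exp(−½‖x−ν_i‖²/σ²))],
x drawn from the mixture with the true means μ. -/
def popL (d C : ℕ) (σ : ℝ) (μ ν : Fin C → E d) : ℝ :=
  ∫ x, Real.log ((1 / C : ℝ) * ∑ i : Fin C, Real.exp (-‖x - ν i‖ ^ 2 / (2 * σ ^ 2)))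
    ∂(mixture d C σ μ)

open scoped RealInnerProductSpace

namespace HessianProof

variable {d : ℕ}


lemma integrable_exp_inner_gauss (b β : ℝ) (hb : 0 < b) (v : E d) :
    Integrable (fun y : E d => rexp (β * ⟪v, y⟫ - b * ‖y‖ ^ 2)) := by
  have h := (GaussianFourier.integrable_cexp_neg_mul_sq_norm_add
      (V := E d) (b := (b : ℂ)) (by simpa using hb) (β : ℂ) v).norm
  refine h.congr (Filter.Eventually.of_forall fun y => ?_)
  have h1 : (-(b:ℂ) * (‖y‖:ℝ) ^ 2 + (β:ℂ) * (⟪v, y⟫ : ℝ)) =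
      ((β * ⟪v, y⟫ - b * ‖y‖ ^ 2 : ℝ) : ℂ) := by push_cast; ring
  simp only [h1, Complex.norm_exp_ofReal]

lemma integral_exp_inner_gauss (b : ℝ) (hb : 0 < b) (v : E d) (t : ℝ) :
    ∫ y : E d, rexp (t * ⟪v, y⟫ - b * ‖y‖ ^ 2)
      = (π / b) ^ ((d : ℝ) / 2) * rexp (t ^ 2 * ‖v‖ ^ 2 / (4 * b)) := by
  have h := GaussianFourier.integral_cexp_neg_mul_sq_norm_add
      (V := E d) (b := (b : ℂ)) (by simpa using hb) (t : ℂ) v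
  have h2 : ∀ y : E d, (-(b:ℂ) * (‖y‖:ℝ) ^ 2 + (t:ℂ) * (⟪v, y⟫ : ℝ)) =
      ((t * ⟪v, y⟫ - b * ‖y‖ ^ 2 : ℝ) : ℂ) := by intro y; push_cast; ring
  rw [← Complex.ofReal_inj]
  have hL : ((∫ y : E d, rexp (t * ⟪v, y⟫ - b * ‖y‖ ^ 2) : ℝ) : ℂ)
      = ∫ y : E d, Complex.exp (-(b:ℂ) * (‖y‖:ℝ) ^ 2 + (t:ℂ) * (⟪v, y⟫ : ℝ)) := by
    change Complex.ofRealLI (∫ y : E d, rexp (t * ⟪v, y⟫ - b * ‖y‖ ^ 2)) = _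
    rw [← Complex.ofRealLI.integral_comp_comm]
    congr 1; funext y
    simp only [h2]
    exact Complex.ofReal_exp _
  rw [hL, h]
  have hfr : ((Module.finrank ℝ (E d) : ℂ)) = ((d:ℝ) : ℂ) := by
    norm_cast; exact finrank_euclideanSpace_fin
  rw [hfr]
  have hpb : (0:ℝ) ≤ π / b := by positivity
  have e1 : ((π:ℂ) / (b:ℂ)) = ((π / b : ℝ) : ℂ) := by push_cast; ring
  have e2 : ((((d:ℝ)):ℂ) / 2) = (((d:ℝ) / 2 : ℝ) : ℂ) := by push_cast; ring
  have e3 : ((t:ℂ) ^ 2 * ((‖v‖:ℝ):ℂ) ^ 2 / (4 * (b:ℂ)))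
      = ((t ^ 2 * ‖v‖ ^ 2 / (4 * b) : ℝ) : ℂ) := by push_cast; ring
  rw [e1, e2, e3, ← Complex.ofReal_cpow hpb, ← Complex.ofReal_exp, ← Complex.ofReal_mul]

lemma integral_gauss_norm (b : ℝ) (hb : 0 < b) :
    ∫ y : E d, rexp (- b * ‖y‖ ^ 2) = (π / b) ^ ((d : ℝ) / 2) := by
  have := integral_exp_inner_gauss (d := d) b hb 0 0
  simpa using this

lemma abs_le_exps (x : ℝ) : |x| ≤ rexp x + rexp (-x) := by
  rcases abs_cases x with ⟨h, _⟩ | ⟨h, _⟩ <;> rw [h] <;>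
    nlinarith [Real.add_one_le_exp x, Real.add_one_le_exp (-x), Real.exp_pos x,
      Real.exp_pos (-x)]

lemma sq_le_exps (x : ℝ) : x ^ 2 ≤ 2 * (rexp x + rexp (-x)) := by
  rcases le_total 0 x with h | h
  · nlinarith [Real.quadratic_le_exp_of_nonneg h, Real.exp_pos x, Real.exp_pos (-x)]
  · nlinarith [Real.quadratic_le_exp_of_nonneg (neg_nonneg.mpr h), Real.exp_pos x,
      Real.exp_pos (-x)]

lemma exp_mul_le_exps {t c : ℝ} (x : ℝ) (ht : |t| ≤ c) :
    rexp (t * x) ≤ rexp (c * x) + rexp (-(c * x)) := by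
  have h : t * x ≤ |c * x| := by
    calc t * x ≤ |t * x| := le_abs_self _
    _ = |t| * |x| := abs_mul _ _
    _ ≤ c * |x| := by
        have := abs_nonneg x
        exact mul_le_mul_of_nonneg_right ht (abs_nonneg x)
    _ = |c * x| := by
        rw [abs_mul, abs_of_nonneg ((abs_nonneg t).trans ht)]
  rcases abs_cases (c * x) with ⟨h1, _⟩ | ⟨h1, _⟩
  · rw [h1] at h
    nlinarith [Real.exp_le_exp.mpr h, Real.exp_pos (-(c*x))]
  · rw [h1] at h
    nlinarith [Real.exp_le_exp.mpr h, Real.exp_pos (c*x)]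

/-- the master domination bound -/
def dbound (c b : ℝ) (v : E d) (y : E d) : ℝ :=
  2 * ((rexp ⟪v, y⟫ + rexp (-⟪v, y⟫)) * (rexp (c * ⟪v, y⟫) + rexp (-(c * ⟪v, y⟫)))) *
    rexp (-b * ‖y‖ ^ 2)

lemma integrable_dbound (c b : ℝ) (hb : 0 < b) (v : E d) :
    Integrable (fun y => dbound c b v y) := by
  have h : (fun y => dbound c b v y) = fun y : E d =>
      2 * (rexp ((1 + c) * ⟪v, y⟫ - b * ‖y‖ ^ 2) + rexp ((1 - c) * ⟪v, y⟫ - b * ‖y‖ ^ 2)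
        + rexp ((c - 1) * ⟪v, y⟫ - b * ‖y‖ ^ 2) + rexp ((-1 - c) * ⟪v, y⟫ - b * ‖y‖ ^ 2)) := by
    funext y
    simp only [dbound]
    ring_nf
    simp only [← Real.exp_add]
    ring_nf
  rw [h]
  exact (((((integrable_exp_inner_gauss b (1+c) hb v).add
    (integrable_exp_inner_gauss b (1-c) hb v)).add
    (integrable_exp_inner_gauss b (c-1) hb v)).add
    (integrable_exp_inner_gauss b (-1-c) hb v)).const_mul 2)

lemma exp_split {t b : ℝ} (x n : ℝ) :
    rexp (t * x - b * n) = rexp (t * x) * rexp (-(b * n)) := by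
  rw [← Real.exp_add]; ring_nf

lemma abs_mul_exp_le_dbound {t c : ℝ} (ht : |t| ≤ c) (b : ℝ) (v y : E d) :
    |⟪v, y⟫ * rexp (t * ⟪v, y⟫ - b * ‖y‖ ^ 2)| ≤ dbound c b v y := by
  set x := ⟪v, y⟫ with hx
  have key : |x| * rexp (t * x) ≤
      2 * ((rexp x + rexp (-x)) * (rexp (c * x) + rexp (-(c * x)))) := by
    have h1 := abs_le_exps x
    have h2 := exp_mul_le_exps x ht
    nlinarith [Real.exp_pos x, Real.exp_pos (-x), Real.exp_pos (c*x), Real.exp_pos (-(c*x)),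
      Real.exp_pos (t*x), abs_nonneg x]
  rw [abs_mul, exp_split, abs_of_pos (by positivity : (0:ℝ) < rexp (t*x) * rexp (-(b*‖y‖^2))),
    ← mul_assoc]
  unfold dbound
  rw [← hx]
  have hexp : (0:ℝ) ≤ rexp (-(b * ‖y‖ ^ 2)) := (Real.exp_pos _).le
  calc |x| * rexp (t * x) * rexp (-(b * ‖y‖ ^ 2))
      ≤ 2 * ((rexp x + rexp (-x)) * (rexp (c * x) + rexp (-(c * x)))) * rexp (-(b * ‖y‖ ^ 2)) :=
        mul_le_mul_of_nonneg_right key hexp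
    _ = 2 * ((rexp x + rexp (-x)) * (rexp (c * x) + rexp (-(c * x)))) * rexp (-b * ‖y‖ ^ 2) := by
        ring_nf

lemma sq_mul_exp_le_dbound {t c : ℝ} (ht : |t| ≤ c) (b : ℝ) (v y : E d) :
    |⟪v, y⟫ ^ 2 * rexp (t * ⟪v, y⟫ - b * ‖y‖ ^ 2)| ≤ dbound c b v y := by
  set x := ⟪v, y⟫ with hx
  have key : x ^ 2 * rexp (t * x) ≤
      2 * ((rexp x + rexp (-x)) * (rexp (c * x) + rexp (-(c * x)))) := by
    have h1 := sq_le_exps x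
    have h2 := exp_mul_le_exps x ht
    nlinarith [Real.exp_pos x, Real.exp_pos (-x), Real.exp_pos (c*x), Real.exp_pos (-(c*x)),
      Real.exp_pos (t*x), sq_nonneg x]
  rw [abs_mul, exp_split, abs_of_pos (by positivity : (0:ℝ) < rexp (t*x) * rexp (-(b*‖y‖^2))),
    abs_of_nonneg (sq_nonneg x), ← mul_assoc]
  unfold dbound
  rw [← hx]
  have hexp : (0:ℝ) ≤ rexp (-(b * ‖y‖ ^ 2)) := (Real.exp_pos _).le
  calc x ^ 2 * rexp (t * x) * rexp (-(b * ‖y‖ ^ 2))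
      ≤ 2 * ((rexp x + rexp (-x)) * (rexp (c * x) + rexp (-(c * x)))) * rexp (-(b * ‖y‖ ^ 2)) :=
        mul_le_mul_of_nonneg_right key hexp
    _ = 2 * ((rexp x + rexp (-x)) * (rexp (c * x) + rexp (-(c * x)))) * rexp (-b * ‖y‖ ^ 2) := by
        ring_nf



lemma cont_inner (v : E d) : Continuous fun y : E d => ⟪v, y⟫ :=
  continuous_const.inner continuous_id

lemma cont_exp_inner (b t : ℝ) (v : E d) :
    Continuous fun y : E d => rexp (t * ⟪v, y⟫ - b * ‖y‖ ^ 2) :=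
  ((continuous_const.mul (cont_inner v)).sub (continuous_const.mul (continuous_norm.pow 2))).rexp

lemma cont_inner_exp (b t : ℝ) (v : E d) :
    Continuous fun y : E d => ⟪v, y⟫ * rexp (t * ⟪v, y⟫ - b * ‖y‖ ^ 2) :=
  (cont_inner v).mul (cont_exp_inner b t v)

lemma cont_inner_sq_exp (b t : ℝ) (v : E d) :
    Continuous fun y : E d => ⟪v, y⟫ ^ 2 * rexp (t * ⟪v, y⟫ - b * ‖y‖ ^ 2) :=
  ((cont_inner v).pow 2).mul (cont_exp_inner b t v)

lemma abs_le_of_ball {t t₀ : ℝ} (h : t ∈ Metric.ball t₀ 1) : |t| ≤ |t₀| + 1 := by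
  have h1 : |t - t₀| < 1 := by simpa [Real.dist_eq] using h
  calc |t| = |t₀ + (t - t₀)| := by ring_nf
  _ ≤ |t₀| + |t - t₀| := abs_add_le _ _
  _ ≤ |t₀| + 1 := by linarith

lemma hasDerivAt_mgf (b : ℝ) (hb : 0 < b) (v : E d) (t₀ : ℝ) :
    HasDerivAt (fun t => ∫ y : E d, rexp (t * ⟪v, y⟫ - b * ‖y‖ ^ 2))
      (∫ y : E d, ⟪v, y⟫ * rexp (t₀ * ⟪v, y⟫ - b * ‖y‖ ^ 2)) t₀ := by
  have key := hasDerivAt_integral_of_dominated_loc_of_deriv_le (μ := volume) (x₀ := t₀)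
    (F := fun t (y : E d) => rexp (t * ⟪v, y⟫ - b * ‖y‖ ^ 2))
    (F' := fun t (y : E d) => ⟪v, y⟫ * rexp (t * ⟪v, y⟫ - b * ‖y‖ ^ 2))
    (bound := dbound (|t₀| + 1) b v) (Metric.ball_mem_nhds t₀ one_pos)
    (Filter.Eventually.of_forall fun t => (cont_exp_inner b t v).aestronglyMeasurable)
    (integrable_exp_inner_gauss b t₀ hb v)
    ((cont_inner_exp b t₀ v).aestronglyMeasurable)
    (Filter.Eventually.of_forall fun y t ht => by
      simpa [Real.norm_eq_abs, abs_mul, Real.abs_exp] using abs_mul_exp_le_dbound (abs_le_of_ball ht) b v y)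
    (integrable_dbound _ b hb v)
    (Filter.Eventually.of_forall fun y t _ => by
      have h1 : HasDerivAt (fun t : ℝ => t * ⟪v, y⟫ - b * ‖y‖ ^ 2) ⟪v, y⟫ t :=
        (hasDerivAt_mul_const _).sub_const _
      simpa [mul_comm] using h1.exp)
  exact key.2

lemma integral_inner_mul_exp (b : ℝ) (hb : 0 < b) (v : E d) (t : ℝ) :
    ∫ y : E d, ⟪v, y⟫ * rexp (t * ⟪v, y⟫ - b * ‖y‖ ^ 2)
      = (π / b) ^ ((d : ℝ) / 2) * (t * ‖v‖ ^ 2 / (2 * b)) * rexp (t ^ 2 * ‖v‖ ^ 2 / (4 * b)) := by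
  have h1 := hasDerivAt_mgf b hb v t
  have heq : (fun t : ℝ => ∫ y : E d, rexp (t * ⟪v, y⟫ - b * ‖y‖ ^ 2))
      = fun t : ℝ => (π / b) ^ ((d : ℝ) / 2) * rexp (t ^ 2 * ‖v‖ ^ 2 / (4 * b)) :=
    funext fun t => integral_exp_inner_gauss b hb v t
  rw [heq] at h1
  have hs : HasDerivAt (fun s : ℝ => s ^ 2 * ‖v‖ ^ 2 / (4 * b)) (2 * t * ‖v‖ ^ 2 / (4 * b)) t := by
    simpa using ((hasDerivAt_pow 2 t).mul_const (‖v‖ ^ 2)).div_const (4 * b)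
  have h2 := (hs.exp).const_mul ((π / b) ^ ((d : ℝ) / 2))
  refine h1.unique ?_
  convert h2 using 1
  rfl
  field_simp
  ring

lemma hasDerivAt_moment1 (b : ℝ) (hb : 0 < b) (v : E d) :
    HasDerivAt (fun t => ∫ y : E d, ⟪v, y⟫ * rexp (t * ⟪v, y⟫ - b * ‖y‖ ^ 2))
      (∫ y : E d, ⟪v, y⟫ ^ 2 * rexp (-(b * ‖y‖ ^ 2))) 0 := by
  have key := hasDerivAt_integral_of_dominated_loc_of_deriv_le (μ := volume) (x₀ := (0:ℝ))
    (F := fun t (y : E d) => ⟪v, y⟫ * rexp (t * ⟪v, y⟫ - b * ‖y‖ ^ 2))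
    (F' := fun t (y : E d) => ⟪v, y⟫ ^ 2 * rexp (t * ⟪v, y⟫ - b * ‖y‖ ^ 2))
    (bound := dbound 1 b v) (Metric.ball_mem_nhds (0:ℝ) one_pos)
    (Filter.Eventually.of_forall fun t => (cont_inner_exp b t v).aestronglyMeasurable)
    (Integrable.mono' (integrable_dbound 1 b hb v)
      ((cont_inner_exp b 0 v).aestronglyMeasurable)
      (Filter.Eventually.of_forall fun y => by
        simpa [Real.norm_eq_abs, abs_mul, Real.abs_exp] using abs_mul_exp_le_dbound (by norm_num : |(0:ℝ)| ≤ 1) b v y))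
    ((cont_inner_sq_exp b 0 v).aestronglyMeasurable)
    (Filter.Eventually.of_forall fun y t ht => by
      have ht1 : |t| ≤ 1 := by simpa using abs_le_of_ball ht
      simpa [Real.norm_eq_abs, abs_mul, Real.abs_exp, sq_abs] using sq_mul_exp_le_dbound ht1 b v y)
    (integrable_dbound 1 b hb v)
    (Filter.Eventually.of_forall fun y t _ => by
      have h1 : HasDerivAt (fun t : ℝ => t * ⟪v, y⟫ - b * ‖y‖ ^ 2) ⟪v, y⟫ t :=
        (hasDerivAt_mul_const _).sub_const _
      have h2 := (h1.exp).const_mul ⟪v, y⟫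
      simpa [pow_two, mul_comm, mul_assoc, mul_left_comm] using h2)
  have h := key.2
  have heq : (fun y : E d => ⟪v, y⟫ ^ 2 * rexp (0 * ⟪v, y⟫ - b * ‖y‖ ^ 2))
      = fun y : E d => ⟪v, y⟫ ^ 2 * rexp (-(b * ‖y‖ ^ 2)) := by
    funext y; norm_num
  rwa [heq] at h

lemma second_moment (b : ℝ) (hb : 0 < b) (v : E d) :
    ∫ y : E d, ⟪v, y⟫ ^ 2 * rexp (-(b * ‖y‖ ^ 2))
      = (π / b) ^ ((d : ℝ) / 2) * (‖v‖ ^ 2 / (2 * b)) := by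
  have h1 := hasDerivAt_moment1 b hb v
  have heq : (fun t : ℝ => ∫ y : E d, ⟪v, y⟫ * rexp (t * ⟪v, y⟫ - b * ‖y‖ ^ 2))
      = fun t : ℝ => (π / b) ^ ((d : ℝ) / 2) * (t * ‖v‖ ^ 2 / (2 * b))
          * rexp (t ^ 2 * ‖v‖ ^ 2 / (4 * b)) :=
    funext fun t => integral_inner_mul_exp b hb v t
  rw [heq] at h1
  have hm : HasDerivAt (fun t : ℝ => t ^ 2 * ‖v‖ ^ 2 / (4 * b)) 0 (0:ℝ) := by
    simpa using ((hasDerivAt_pow 2 (0:ℝ)).mul_const (‖v‖ ^ 2)).div_const (4 * b)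
  have he := hm.exp
  have hl : HasDerivAt (fun t : ℝ => (π / b) ^ ((d : ℝ) / 2) * (t * ‖v‖ ^ 2 / (2 * b)))
      ((π / b) ^ ((d : ℝ) / 2) * (‖v‖ ^ 2 / (2 * b))) (0:ℝ) := by
    simpa [mul_div_assoc] using
      (((hasDerivAt_id (0:ℝ)).mul_const (‖v‖ ^ 2)).div_const (2 * b)).const_mul
        ((π / b) ^ ((d : ℝ) / 2))
  have h2 := hl.mul he
  have := h1.unique h2
  simpa using this


lemma integrable_gauss (b : ℝ) (hb : 0 < b) :
    Integrable (fun y : E d => rexp (-b * ‖y‖ ^ 2)) := by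
  simpa [neg_mul] using integrable_exp_inner_gauss b 0 hb (0 : E d)

lemma quad_gauss_bound (b : ℝ) (hb : 0 < b) (m x : E d) :
    (1 + ‖x‖ ^ 2) * rexp (-b * ‖x - m‖ ^ 2)
      ≤ (1 + 4 / b) * rexp (b * ‖m‖ ^ 2) * rexp (-(b / 4) * ‖x‖ ^ 2) := by
  have hnorm : ‖x‖ ^ 2 ≤ 2 * ‖x - m‖ ^ 2 + 2 * ‖m‖ ^ 2 := by
    have h := norm_add_le (x - m) m
    have h2 : x - m + m = x := by abel
    rw [h2] at h
    nlinarith [norm_nonneg (x - m), norm_nonneg m, norm_nonneg x,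
      mul_self_le_mul_self (norm_nonneg x) h, sq_nonneg (‖x - m‖ - ‖m‖)]
  set t2 := ‖x‖ ^ 2 with ht2def
  set A := rexp (-(b / 4) * t2) with hA
  have ht2 : 0 ≤ t2 := sq_nonneg _
  have hA0 : 0 < A := Real.exp_pos _
  have hA1 : A ≤ 1 := Real.exp_le_one_iff.mpr (by nlinarith)
  have h1 : rexp (-b * ‖x - m‖ ^ 2) ≤ rexp (b * ‖m‖ ^ 2) * (A * A) := by
    rw [hA, ← Real.exp_add, ← Real.exp_add]
    apply Real.exp_le_exp.mpr
    nlinarith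
  have h2 : t2 * A ≤ 4 / b := by
    have h0 : (b / 4) * t2 ≤ rexp ((b / 4) * t2) := by
      nlinarith [Real.add_one_le_exp ((b / 4) * t2)]
    have hmul : ((b / 4) * t2) * A ≤ rexp ((b / 4) * t2) * A :=
      mul_le_mul_of_nonneg_right h0 hA0.le
    have hcancel : rexp ((b / 4) * t2) * A = 1 := by
      rw [hA, ← Real.exp_add]
      simp
    rw [hcancel] at hmul
    rw [div_eq_mul_inv]
    have hb4 : (0:ℝ) < b / 4 := by linarith
    calc t2 * A = (4 / b) * (((b / 4) * t2) * A) := by field_simp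
    _ ≤ (4 / b) * 1 := by
        apply mul_le_mul_of_nonneg_left hmul (by positivity)
    _ = 4 * b⁻¹ := by field_simp
  have hEm : (0:ℝ) < rexp (b * ‖m‖ ^ 2) := Real.exp_pos _
  calc (1 + t2) * rexp (-b * ‖x - m‖ ^ 2)
      ≤ (1 + t2) * (rexp (b * ‖m‖ ^ 2) * (A * A)) :=
        mul_le_mul_of_nonneg_left h1 (by positivity)
    _ = rexp (b * ‖m‖ ^ 2) * (A * A + (t2 * A) * A) := by ring
    _ ≤ rexp (b * ‖m‖ ^ 2) * (A + (4 / b) * A) := by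
        apply mul_le_mul_of_nonneg_left _ hEm.le
        have e1 : A * A ≤ A := by nlinarith
        have e2 : (t2 * A) * A ≤ (4 / b) * A := mul_le_mul_of_nonneg_right h2 hA0.le
        linarith
    _ = (1 + 4 / b) * rexp (b * ‖m‖ ^ 2) * A := by ring

variable {C : ℕ}

/-- the density of the mixture -/
def dens (σ : ℝ) (μ : Fin C → E d) (x : E d) : ℝ :=
  (1 / C : ℝ) * ∑ j : Fin C, gaussPdf d σ (μ j) x

lemma dens_nonneg (σ : ℝ) (μ : Fin C → E d) (x : E d) : 0 ≤ dens σ μ x := by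
  unfold dens gaussPdf
  have : ∀ j : Fin C, (0:ℝ) ≤ (2 * π * σ ^ 2) ^ (-(d : ℝ) / 2)
      * rexp (-‖x - μ j‖ ^ 2 / (2 * σ ^ 2)) := fun j => by
    apply mul_nonneg (Real.rpow_nonneg (by positivity) _) (Real.exp_pos _).le
  exact mul_nonneg (by positivity) (Finset.sum_nonneg fun j _ => this j)

lemma dens_continuous (σ : ℝ) (μ : Fin C → E d) : Continuous (dens σ μ) := by
  unfold dens gaussPdf
  apply continuous_const.mul
  apply continuous_finset_sum
  intro j _
  apply continuous_const.mul
  exact ((((continuous_id.sub continuous_const).norm.pow 2).neg.div_const _)).rexp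

lemma mixture_eq (σ : ℝ) (μ : Fin C → E d) :
    mixture d C σ μ = volume.withDensity fun x => ((dens σ μ x).toNNReal : ℝ≥0∞) := rfl

lemma integral_mixture (σ : ℝ) (μ : Fin C → E d) (g : E d → ℝ) :
    ∫ x, g x ∂(mixture d C σ μ) = ∫ x, dens σ μ x * g x := by
  rw [mixture_eq,
    integral_withDensity_eq_integral_smul ((dens_continuous σ μ).measurable.real_toNNReal) g]
  congr 1
  funext x
  simp [NNReal.smul_def, Real.coe_toNNReal _ (dens_nonneg σ μ x), smul_eq_mul]

lemma integrable_mixture_iff (σ : ℝ) (μ : Fin C → E d) (g : E d → ℝ) :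
    Integrable g (mixture d C σ μ) ↔ Integrable (fun x => dens σ μ x * g x) volume := by
  rw [mixture_eq,
    integrable_withDensity_iff_integrable_smul ((dens_continuous σ μ).measurable.real_toNNReal)]
  have h : (fun x => (dens σ μ x).toNNReal • g x) = fun x => dens σ μ x * g x := by
    funext x
    simp [NNReal.smul_def, Real.coe_toNNReal _ (dens_nonneg σ μ x), smul_eq_mul]
  rw [h]

/-- master integrability lemma: anything with quadratic growth is mixture-integrable -/
lemma integrable_mix_quad {σ : ℝ} (hσ : 0 < σ) (μ : Fin C → E d) {g : E d → ℝ}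
    (hg : AEStronglyMeasurable g volume) {c : ℝ}
    (hle : ∀ x, |g x| ≤ c * (1 + ‖x‖ ^ 2)) : Integrable g (mixture d C σ μ) := by
  have hb : (0:ℝ) < (2 * σ ^ 2)⁻¹ := by positivity
  set b : ℝ := (2 * σ ^ 2)⁻¹ with hbdef
  have hc : 0 ≤ c := by
    have := (abs_nonneg (g 0)).trans (hle 0)
    simpa using this
  set K : ℝ := (1 / C : ℝ) * ∑ j : Fin C,
    (2 * π * σ ^ 2) ^ (-(d : ℝ) / 2) * (c * ((1 + 4 / b) * rexp (b * ‖μ j‖ ^ 2))) with hK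
  rw [integrable_mixture_iff]
  apply Integrable.mono' ((integrable_gauss (b/4) (by positivity)).const_mul K)
  · exact ((dens_continuous σ μ).aestronglyMeasurable).mul hg
  refine Filter.Eventually.of_forall fun x => ?_
  have hdx := dens_nonneg σ μ x
  rw [Real.norm_eq_abs, abs_mul, abs_of_nonneg hdx]
  have step1 : dens σ μ x * |g x| ≤ dens σ μ x * (c * (1 + ‖x‖ ^ 2)) :=
    mul_le_mul_of_nonneg_left (hle x) hdx
  refine step1.trans ?_
  have hκ : (0:ℝ) ≤ (2 * π * σ ^ 2) ^ (-(d : ℝ) / 2) := Real.rpow_nonneg (by positivity) _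
  have hexparg : ∀ m : E d, -‖x - m‖ ^ 2 / (2 * σ ^ 2) = -b * ‖x - m‖ ^ 2 := by
    intro m; rw [hbdef]; ring
  calc dens σ μ x * (c * (1 + ‖x‖ ^ 2))
      = (1 / C : ℝ) * ∑ j : Fin C, (2 * π * σ ^ 2) ^ (-(d : ℝ) / 2) *
          (c * ((1 + ‖x‖ ^ 2) * rexp (-b * ‖x - μ j‖ ^ 2))) := by
        unfold dens gaussPdf
        rw [mul_assoc, Finset.sum_mul]
        congr 1
        refine Finset.sum_congr rfl fun j _ => ?_
        rw [hexparg (μ j)]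
        ring
    _ ≤ (1 / C : ℝ) * ∑ j : Fin C, (2 * π * σ ^ 2) ^ (-(d : ℝ) / 2) *
          (c * ((1 + 4 / b) * rexp (b * ‖μ j‖ ^ 2) * rexp (-(b/4) * ‖x‖ ^ 2))) := by
        apply mul_le_mul_of_nonneg_left _ (by positivity : (0:ℝ) ≤ (1 / C : ℝ))
        refine Finset.sum_le_sum fun j _ => ?_
        apply mul_le_mul_of_nonneg_left _ hκ
        apply mul_le_mul_of_nonneg_left _ hc
        exact quad_gauss_bound b hb (μ j) x
    _ = K * rexp (-(b/4) * ‖x‖ ^ 2) := by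
        rw [hK, mul_assoc _ _ (rexp (-(b/4) * ‖x‖ ^ 2)), Finset.sum_mul]
        congr 1
        refine Finset.sum_congr rfl fun j _ => ?_
        ring


section Pointwise

variable (σ : ℝ) (μ : Fin C → E d) (i : Fin C) (u : E d)

def aF (x : E d) : ℝ := ⟪u, x - μ i⟫

def AF (x : E d) : ℝ := ∑ j ∈ Finset.univ.erase i, rexp (-‖x - μ j‖ ^ 2 / (2 * σ ^ 2))

def psiF (x : E d) (s : ℝ) : ℝ :=
  (2 * aF μ i u x * s - ‖u‖ ^ 2 * s ^ 2 - ‖x - μ i‖ ^ 2) / (2 * σ ^ 2)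

def PhiF (x : E d) (s : ℝ) : ℝ := AF σ μ i x + rexp (psiF σ μ i u x s)

def WF (x : E d) (s : ℝ) : ℝ := rexp (psiF σ μ i u x s) / PhiF σ μ i u x s

def vF (x : E d) (s : ℝ) : ℝ := (aF μ i u x - s * ‖u‖ ^ 2) / σ ^ 2

def F1 (x : E d) (s : ℝ) : ℝ := WF σ μ i u x s * vF σ μ i u x s

def F2 (x : E d) (s : ℝ) : ℝ :=
  WF σ μ i u x s * (1 - WF σ μ i u x s) * vF σ μ i u x s ^ 2
    - WF σ μ i u x s * (‖u‖ ^ 2 / σ ^ 2)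

lemma psi_eq (x : E d) (s : ℝ) :
    -‖x - (μ i + s • u)‖ ^ 2 / (2 * σ ^ 2) = psiF σ μ i u x s := by
  have hv : x - (μ i + s • u) = (x - μ i) - s • u := by abel
  have hexp : ‖(x - μ i) - s • u‖ ^ 2
      = ‖x - μ i‖ ^ 2 - 2 * (s * ⟪u, x - μ i⟫) + s ^ 2 * ‖u‖ ^ 2 := by
    rw [norm_sub_sq_real, real_inner_smul_right, norm_smul, mul_pow]
    simp only [Real.norm_eq_abs, sq_abs]
    rw [real_inner_comm]
  rw [hv, hexp]
  unfold psiF aF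
  ring

lemma psi_nonpos (hσ : 0 < σ) (x : E d) (s : ℝ) : psiF σ μ i u x s ≤ 0 := by
  rw [← psi_eq]
  apply div_nonpos_of_nonpos_of_nonneg
  · simp [sq_nonneg]
  · positivity

lemma AF_nonneg (x : E d) : 0 ≤ AF σ μ i x :=
  Finset.sum_nonneg fun j _ => (Real.exp_pos _).le

lemma AF_le (x : E d) : AF σ μ i x ≤ (C : ℝ) - 1 := by
  classical
  have h : AF σ μ i x ≤ ∑ _j ∈ Finset.univ.erase i, (1:ℝ) := by
    apply Finset.sum_le_sum
    intro j _
    apply Real.exp_le_one_iff.mpr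
    apply div_nonpos_of_nonpos_of_nonneg
    · simp [sq_nonneg]
    · positivity
  rw [Finset.sum_const, nsmul_eq_mul, mul_one] at h
  have hcard : (Finset.univ.erase i).card = C - 1 := by
    rw [Finset.card_erase_of_mem (Finset.mem_univ i), Finset.card_univ, Fintype.card_fin]
  rw [hcard] at h
  refine h.trans ?_
  have : 1 ≤ C := Fin.pos i
  push_cast [Nat.cast_sub this]
  exact le_refl _

lemma PhiF_pos (x : E d) (s : ℝ) : 0 < PhiF σ μ i u x s :=
  add_pos_of_nonneg_of_pos (AF_nonneg σ μ i x) (Real.exp_pos _)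

lemma WF_pos (x : E d) (s : ℝ) : 0 < WF σ μ i u x s :=
  div_pos (Real.exp_pos _) (PhiF_pos σ μ i u x s)

lemma WF_le_one (x : E d) (s : ℝ) : WF σ μ i u x s ≤ 1 := by
  rw [WF, div_le_one (PhiF_pos σ μ i u x s)]
  unfold PhiF
  exact le_add_of_nonneg_left (AF_nonneg σ μ i x)

lemma sum_exp_eq (x : E d) (s : ℝ) :
    ∑ j : Fin C, rexp (-‖x - Function.update μ i (μ i + s • u) j‖ ^ 2 / (2 * σ ^ 2))
      = PhiF σ μ i u x s := by
  rw [← Finset.add_sum_erase _ _ (Finset.mem_univ i), Function.update_self,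
    psi_eq σ μ i u x s]
  unfold PhiF AF
  rw [add_comm]
  congr 1
  refine Finset.sum_congr rfl fun j hj => ?_
  rw [Function.update_of_ne (Finset.ne_of_mem_erase hj)]

lemma popL_eq (s : ℝ) :
    popL d C σ μ (Function.update μ i (μ i + s • u))
      = ∫ x, Real.log ((1 / C : ℝ) * PhiF σ μ i u x s) ∂(mixture d C σ μ) := by
  unfold popL
  congr 1
  funext x
  rw [sum_exp_eq]

end Pointwise

section Deriv

variable (σ : ℝ) (μ : Fin C → E d) (i : Fin C) (u : E d)

lemma hasDerivAt_psiF' (hσ : 0 < σ) (x : E d) (s : ℝ) :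
    HasDerivAt (psiF σ μ i u x) (vF σ μ i u x s) s := by
  have ha : HasDerivAt (fun s : ℝ => 2 * aF μ i u x * s) (2 * aF μ i u x) s := by
    simpa using (hasDerivAt_id s).const_mul (2 * aF μ i u x)
  have hb : HasDerivAt (fun s : ℝ => ‖u‖ ^ 2 * s ^ 2) (‖u‖ ^ 2 * (2 * s)) s := by
    simpa using (hasDerivAt_pow 2 s).const_mul (‖u‖ ^ 2)
  have h1 := ((ha.sub hb).sub_const (‖x - μ i‖ ^ 2)).div_const (2 * σ ^ 2)
  have h2 : (2 * aF μ i u x - ‖u‖ ^ 2 * (2 * s)) / (2 * σ ^ 2) = vF σ μ i u x s := by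
    unfold vF
    field_simp
  rw [h2] at h1
  exact h1

lemma hasDerivAt_PhiF (hσ : 0 < σ) (x : E d) (s : ℝ) :
    HasDerivAt (PhiF σ μ i u x) (rexp (psiF σ μ i u x s) * vF σ μ i u x s) s :=
  ((hasDerivAt_psiF' σ μ i u hσ x s).exp).const_add (AF σ μ i x)

lemma hasDerivAt_log_term (hC : 0 < C) (hσ : 0 < σ) (x : E d) (s : ℝ) :
    HasDerivAt (fun s => Real.log ((1 / C : ℝ) * PhiF σ μ i u x s))
      (F1 σ μ i u x s) s := by
  have hCpos : (0:ℝ) < (1 / C : ℝ) := by positivity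
  have hPhi := (hasDerivAt_PhiF σ μ i u hσ x s).const_mul ((1:ℝ) / C)
  have hne : (1 / C : ℝ) * PhiF σ μ i u x s ≠ 0 :=
    ne_of_gt (mul_pos hCpos (PhiF_pos σ μ i u x s))
  have h := hPhi.log hne
  convert h using 1
  unfold F1 WF vF
  have hΦ := PhiF_pos σ μ i u x s
  field_simp

lemma hasDerivAt_F1 (hσ : 0 < σ) (x : E d) (s : ℝ) :
    HasDerivAt (fun s => F1 σ μ i u x s) (F2 σ μ i u x s) s := by
  have hψ := hasDerivAt_psiF' σ μ i u hσ x s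
  have hexp := hψ.exp
  have hPhi := hasDerivAt_PhiF σ μ i u hσ x s
  have hΦ := PhiF_pos σ μ i u x s
  have hW := hexp.div hPhi (ne_of_gt hΦ)
  have hv : HasDerivAt (vF σ μ i u x) (-(1 * ‖u‖ ^ 2) / σ ^ 2) s := by
    have := (((hasDerivAt_id s).mul_const (‖u‖ ^ 2)).const_sub (aF μ i u x)).div_const (σ ^ 2)
    exact this
  have h := hW.mul hv
  convert h using 1
  rfl
  rfl
  rfl
  unfold F2 WF vF
  simp only [Pi.div_apply]
  field_simp
  ring

end Deriv

section Bounds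

variable (σ : ℝ) (μ : Fin C → E d) (i : Fin C) (u : E d)

lemma cont_aF : Continuous (aF μ i u) :=
  continuous_const.inner (continuous_id.sub continuous_const)

lemma cont_AF : Continuous (AF σ μ i) := by
  apply continuous_finset_sum
  intro j _
  exact ((((continuous_id.sub continuous_const).norm.pow 2).neg.div_const _)).rexp

lemma cont_psiF (s : ℝ) : Continuous fun x => psiF σ μ i u x s := by
  unfold psiF
  apply Continuous.div_const
  exact (((continuous_const.mul (cont_aF μ i u)).mul continuous_const).sub
    continuous_const).sub ((continuous_id.sub continuous_const).norm.pow 2)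

lemma cont_PhiF (s : ℝ) : Continuous fun x => PhiF σ μ i u x s :=
  (cont_AF σ μ i).add (cont_psiF σ μ i u s).rexp

lemma cont_WF (s : ℝ) : Continuous fun x => WF σ μ i u x s :=
  (cont_psiF σ μ i u s).rexp.div (cont_PhiF σ μ i u s)
    fun x => ne_of_gt (PhiF_pos σ μ i u x s)

lemma cont_vF (s : ℝ) : Continuous fun x => vF σ μ i u x s := by
  unfold vF
  exact ((cont_aF μ i u).sub continuous_const).div_const _

lemma cont_F1 (s : ℝ) : Continuous fun x => F1 σ μ i u x s :=
  (cont_WF σ μ i u s).mul (cont_vF σ μ i u s)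

lemma cont_F2 (s : ℝ) : Continuous fun x => F2 σ μ i u x s :=
  (((cont_WF σ μ i u s).mul (continuous_const.sub (cont_WF σ μ i u s))).mul
    ((cont_vF σ μ i u s).pow 2)).sub ((cont_WF σ μ i u s).mul continuous_const)

lemma abs_aF_le (x : E d) : |aF μ i u x| ≤ ‖u‖ * (‖μ i‖ + ‖x‖) := by
  calc |aF μ i u x| ≤ ‖u‖ * ‖x - μ i‖ := abs_real_inner_le_norm u (x - μ i)
  _ ≤ ‖u‖ * (‖μ i‖ + ‖x‖) := by
      apply mul_le_mul_of_nonneg_left _ (norm_nonneg u)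
      have := norm_sub_le x (μ i)
      linarith

/-- the bound for `F1` -/
def B1 (x : E d) : ℝ := (|aF μ i u x| + ‖u‖ ^ 2) / σ ^ 2

/-- the bound for `F2` -/
def B2 (x : E d) : ℝ := B1 σ μ i u x ^ 2 + ‖u‖ ^ 2 / σ ^ 2

lemma abs_vF_le (hσ : 0 < σ) (x : E d) {s : ℝ} (hs : |s| ≤ 1) :
    |vF σ μ i u x s| ≤ B1 σ μ i u x := by
  unfold vF B1
  rw [abs_div, abs_of_pos (by positivity : (0:ℝ) < σ ^ 2)]
  apply (div_le_div_iff_of_pos_right (by positivity : (0:ℝ) < σ ^ 2)).mpr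
  have h1 : |aF μ i u x - s * ‖u‖ ^ 2| ≤ |aF μ i u x| + |s * ‖u‖ ^ 2| := abs_sub _ _
  rw [abs_mul, abs_of_nonneg (sq_nonneg ‖u‖)] at h1
  nlinarith [abs_nonneg (aF μ i u x), sq_nonneg ‖u‖, abs_nonneg s]

lemma abs_F1_le (hσ : 0 < σ) (x : E d) {s : ℝ} (hs : |s| ≤ 1) :
    |F1 σ μ i u x s| ≤ B1 σ μ i u x := by
  have hW0 := WF_pos σ μ i u x s
  have hW1 := WF_le_one σ μ i u x s
  have hv := abs_vF_le σ μ i u hσ x hs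
  calc |F1 σ μ i u x s| = WF σ μ i u x s * |vF σ μ i u x s| := by
        unfold F1; rw [abs_mul, abs_of_pos hW0]
  _ ≤ 1 * |vF σ μ i u x s| := by
        apply mul_le_mul_of_nonneg_right hW1 (abs_nonneg _)
  _ = |vF σ μ i u x s| := one_mul _
  _ ≤ B1 σ μ i u x := hv

lemma abs_F2_le (hσ : 0 < σ) (x : E d) {s : ℝ} (hs : |s| ≤ 1) :
    |F2 σ μ i u x s| ≤ B2 σ μ i u x := by
  have hW0 := WF_pos σ μ i u x s
  have hW1 := WF_le_one σ μ i u x s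
  have hv := abs_vF_le σ μ i u hσ x hs
  have hB1 : 0 ≤ B1 σ μ i u x := (abs_nonneg _).trans hv
  have hvsq : vF σ μ i u x s ^ 2 ≤ B1 σ μ i u x ^ 2 := by
    rw [← sq_abs]
    exact pow_le_pow_left₀ (abs_nonneg _) hv 2
  have hq : (0:ℝ) ≤ ‖u‖ ^ 2 / σ ^ 2 := by positivity
  unfold F2 B2
  have h1 : |WF σ μ i u x s * (1 - WF σ μ i u x s) * vF σ μ i u x s ^ 2|
      ≤ B1 σ μ i u x ^ 2 := by
    rw [abs_mul, abs_of_nonneg (sq_nonneg (vF σ μ i u x s))]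
    have hWW : |WF σ μ i u x s * (1 - WF σ μ i u x s)| ≤ 1 := by
      rw [abs_mul, abs_of_pos hW0, abs_of_nonneg (by linarith)]
      nlinarith
    calc |WF σ μ i u x s * (1 - WF σ μ i u x s)| * vF σ μ i u x s ^ 2
        ≤ 1 * vF σ μ i u x s ^ 2 := mul_le_mul_of_nonneg_right hWW (sq_nonneg _)
    _ = vF σ μ i u x s ^ 2 := one_mul _
    _ ≤ B1 σ μ i u x ^ 2 := hvsq
  have h2 : |WF σ μ i u x s * (‖u‖ ^ 2 / σ ^ 2)| ≤ ‖u‖ ^ 2 / σ ^ 2 := by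
    rw [abs_mul, abs_of_pos hW0, abs_of_nonneg hq]
    nlinarith
  calc |WF σ μ i u x s * (1 - WF σ μ i u x s) * vF σ μ i u x s ^ 2
      - WF σ μ i u x s * (‖u‖ ^ 2 / σ ^ 2)|
      ≤ |WF σ μ i u x s * (1 - WF σ μ i u x s) * vF σ μ i u x s ^ 2|
        + |WF σ μ i u x s * (‖u‖ ^ 2 / σ ^ 2)| := abs_sub _ _
  _ ≤ B1 σ μ i u x ^ 2 + ‖u‖ ^ 2 / σ ^ 2 := add_le_add h1 h2

end Bounds

section IntegrabilityMix

variable (σ : ℝ) (μ : Fin C → E d) (i : Fin C) (u : E d)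

lemma B1_nonneg (x : E d) : 0 ≤ B1 σ μ i u x := by
  unfold B1; positivity

lemma B1_le_lin (hσ : 0 < σ) (x : E d) :
    B1 σ μ i u x ≤ (‖u‖ * (‖μ i‖ + 1) + ‖u‖ ^ 2) / σ ^ 2 * (1 + ‖x‖) := by
  have ha := abs_aF_le μ i u x
  have h1 : |aF μ i u x| + ‖u‖ ^ 2 ≤ (‖u‖ * (‖μ i‖ + 1) + ‖u‖ ^ 2) * (1 + ‖x‖) := by
    nlinarith [norm_nonneg x, norm_nonneg (μ i), norm_nonneg u, sq_nonneg ‖u‖,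
      mul_nonneg (norm_nonneg u) (norm_nonneg x),
      mul_nonneg (mul_nonneg (norm_nonneg u) (norm_nonneg (μ i))) (norm_nonneg x),
      mul_nonneg (sq_nonneg ‖u‖) (norm_nonneg x)]
  calc B1 σ μ i u x ≤ ((‖u‖ * (‖μ i‖ + 1) + ‖u‖ ^ 2) * (1 + ‖x‖)) / σ ^ 2 := by
        unfold B1
        exact (div_le_div_iff_of_pos_right (by positivity : (0:ℝ) < σ ^ 2)).mpr h1
  _ = (‖u‖ * (‖μ i‖ + 1) + ‖u‖ ^ 2) / σ ^ 2 * (1 + ‖x‖) := by ring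

lemma integrable_B1 (hσ : 0 < σ) : Integrable (B1 σ μ i u) (mixture d C σ μ) := by
  apply integrable_mix_quad hσ μ
    (((cont_aF μ i u).abs.add continuous_const).div_const _).aestronglyMeasurable
    (c := 2 * ((‖u‖ * (‖μ i‖ + 1) + ‖u‖ ^ 2) / σ ^ 2))
  intro x
  show |B1 σ μ i u x| ≤ _
  rw [abs_of_nonneg (B1_nonneg σ μ i u x)]
  have h := B1_le_lin σ μ i u hσ x
  have hc : (0:ℝ) ≤ (‖u‖ * (‖μ i‖ + 1) + ‖u‖ ^ 2) / σ ^ 2 := by positivity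
  nlinarith [norm_nonneg x, sq_nonneg (‖x‖ - 1),
    mul_nonneg hc (by nlinarith [sq_nonneg (‖x‖ - 1)] : (0:ℝ) ≤ 1 - ‖x‖ + 2 * ‖x‖ ^ 2)]

lemma B2_nonneg (x : E d) : 0 ≤ B2 σ μ i u x := by
  unfold B2 B1; positivity

lemma integrable_B2 (hσ : 0 < σ) : Integrable (B2 σ μ i u) (mixture d C σ μ) := by
  have hcont : Continuous (B2 σ μ i u) := by
    unfold B2 B1
    exact ((((cont_aF μ i u).abs.add continuous_const).div_const _).pow 2).add
      continuous_const
  apply integrable_mix_quad hσ μ hcont.aestronglyMeasurable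
    (c := 2 * ((‖u‖ * (‖μ i‖ + 1) + ‖u‖ ^ 2) / σ ^ 2) ^ 2 + ‖u‖ ^ 2 / σ ^ 2)
  intro x
  show |B2 σ μ i u x| ≤ _
  rw [abs_of_nonneg (B2_nonneg σ μ i u x)]
  have h := B1_le_lin σ μ i u hσ x
  have hB := B1_nonneg σ μ i u x
  have hc : (0:ℝ) ≤ (‖u‖ * (‖μ i‖ + 1) + ‖u‖ ^ 2) / σ ^ 2 := by positivity
  have hq : (0:ℝ) ≤ ‖u‖ ^ 2 / σ ^ 2 := by positivity
  unfold B2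
  nlinarith [norm_nonneg x, sq_nonneg (‖x‖ - 1), sq_nonneg ‖x‖,
    mul_le_mul h h hB (by positivity : (0:ℝ) ≤ (‖u‖ * (‖μ i‖ + 1) + ‖u‖ ^ 2) / σ ^ 2 * (1 + ‖x‖))]

lemma abs_log_term_le (hC : 1 ≤ C) (hσ : 0 < σ) (x : E d) (s : ℝ) :
    |Real.log ((1 / C : ℝ) * PhiF σ μ i u x s)|
      ≤ Real.log C + |psiF σ μ i u x s| := by
  have hCpos : (0:ℝ) < (C:ℝ) := by exact_mod_cast hC
  have hΦ := PhiF_pos σ μ i u x s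
  have hψ := psi_nonpos σ μ i u hσ x s
  have hup : (1 / C : ℝ) * PhiF σ μ i u x s ≤ 1 := by
    have h1 : PhiF σ μ i u x s ≤ (C : ℝ) := by
      unfold PhiF
      have h2 := AF_le σ μ i x
      have h3 : rexp (psiF σ μ i u x s) ≤ 1 := Real.exp_le_one_iff.mpr hψ
      linarith
    calc (1 / C : ℝ) * PhiF σ μ i u x s ≤ (1 / C : ℝ) * C :=
          mul_le_mul_of_nonneg_left h1 (by positivity)
    _ = 1 := by field_simp
  have hlowpos : (0:ℝ) < (1 / C : ℝ) * rexp (psiF σ μ i u x s) := by positivity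
  have hlow : Real.log ((1 / C : ℝ)) + psiF σ μ i u x s
      ≤ Real.log ((1 / C : ℝ) * PhiF σ μ i u x s) := by
    have h4 : (1 / C : ℝ) * rexp (psiF σ μ i u x s) ≤ (1 / C : ℝ) * PhiF σ μ i u x s := by
      apply mul_le_mul_of_nonneg_left _ (by positivity)
      unfold PhiF
      exact le_add_of_nonneg_left (AF_nonneg σ μ i x)
    calc Real.log ((1 / C : ℝ)) + psiF σ μ i u x s
        = Real.log ((1 / C : ℝ) * rexp (psiF σ μ i u x s)) := by
          rw [Real.log_mul (by positivity) (Real.exp_ne_zero _), Real.log_exp]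
    _ ≤ _ := Real.log_le_log hlowpos h4
  have hneg : Real.log ((1 / C : ℝ) * PhiF σ μ i u x s) ≤ 0 :=
    Real.log_nonpos (by positivity) hup
  have hlogC : Real.log ((1 / C : ℝ)) = - Real.log C := by
    rw [one_div, Real.log_inv]
  rw [abs_of_nonpos hneg]
  have habs : - |psiF σ μ i u x s| ≤ psiF σ μ i u x s := neg_abs_le _
  linarith [hlow, hlogC ▸ hlow]

lemma norm_sq_sub_le (x m : E d) : ‖x - m‖ ^ 2 ≤ 2 * ‖x‖ ^ 2 + 2 * ‖m‖ ^ 2 := by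
  have h := norm_sub_le x m
  nlinarith [norm_nonneg (x - m), norm_nonneg x, norm_nonneg m,
    mul_self_le_mul_self (norm_nonneg (x - m)) h, sq_nonneg (‖x‖ - ‖m‖)]

lemma integrable_log_term (hC : 1 ≤ C) (hσ : 0 < σ) (s : ℝ) :
    Integrable (fun x => Real.log ((1 / C : ℝ) * PhiF σ μ i u x s)) (mixture d C σ μ) := by
  apply integrable_mix_quad hσ μ
    (Real.measurable_log.comp (continuous_const.mul (cont_PhiF σ μ i u s)).measurable).aestronglyMeasurable
    (c := Real.log C + (2 * |s| * ‖u‖ * (‖μ i‖ + 1) + ‖u‖ ^ 2 * s ^ 2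
      + 2 * ‖μ i‖ ^ 2 + 2) / (2 * σ ^ 2))
  intro x
  have h1 := abs_log_term_le σ μ i u hC hσ x s
  have hψb : |psiF σ μ i u x s| ≤ (2 * |s| * ‖u‖ * (‖μ i‖ + 1) + ‖u‖ ^ 2 * s ^ 2
      + 2 * ‖μ i‖ ^ 2 + 2) / (2 * σ ^ 2) * (1 + ‖x‖ ^ 2) := by
    unfold psiF
    rw [abs_div, abs_of_pos (by positivity : (0:ℝ) < 2 * σ ^ 2)]
    rw [div_mul_eq_mul_div]
    apply (div_le_div_iff_of_pos_right (by positivity : (0:ℝ) < 2 * σ ^ 2)).mpr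
    have h2 : |2 * aF μ i u x * s - ‖u‖ ^ 2 * s ^ 2 - ‖x - μ i‖ ^ 2|
        ≤ 2 * |aF μ i u x| * |s| + ‖u‖ ^ 2 * s ^ 2 + ‖x - μ i‖ ^ 2 := by
      have := abs_sub (2 * aF μ i u x * s - ‖u‖ ^ 2 * s ^ 2) (‖x - μ i‖ ^ 2)
      have h3 := abs_sub (2 * aF μ i u x * s) (‖u‖ ^ 2 * s ^ 2)
      rw [abs_of_nonneg (sq_nonneg ‖x - μ i‖)] at this
      have h4 : |2 * aF μ i u x * s| = 2 * |aF μ i u x| * |s| := by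
        rw [abs_mul, abs_mul]; simp [abs_of_nonneg]
      have h5 : |‖u‖ ^ 2 * s ^ 2| = ‖u‖ ^ 2 * s ^ 2 := by
        rw [abs_of_nonneg (by positivity)]
      linarith
    have ha := abs_aF_le μ i u x
    have hn := norm_sq_sub_le x (μ i)
    have hx2 : (0:ℝ) ≤ ‖x‖ ^ 2 := sq_nonneg _
    have hkey : (0:ℝ) ≤ 1 - ‖x‖ + ‖x‖ ^ 2 := by nlinarith [sq_nonneg (‖x‖ - 1)]
    nlinarith [norm_nonneg x, norm_nonneg (μ i), norm_nonneg u, abs_nonneg s,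
      abs_nonneg (aF μ i u x),
      mul_le_mul_of_nonneg_right ha (abs_nonneg s),
      mul_nonneg (mul_nonneg (abs_nonneg s) (norm_nonneg u)) hkey,
      mul_nonneg (mul_nonneg (abs_nonneg s) (norm_nonneg u))
        (mul_nonneg (norm_nonneg (μ i)) hx2),
      mul_nonneg (mul_nonneg (sq_nonneg ‖u‖) (sq_nonneg s)) hx2,
      mul_nonneg (sq_nonneg ‖μ i‖) hx2]
  have hlogC : (0:ℝ) ≤ Real.log C := Real.log_nonneg (by exact_mod_cast hC)
  have hx2 : (0:ℝ) ≤ ‖x‖ ^ 2 := sq_nonneg _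
  calc |Real.log ((1 / C : ℝ) * PhiF σ μ i u x s)|
      ≤ Real.log C + |psiF σ μ i u x s| := h1
  _ ≤ Real.log C * (1 + ‖x‖ ^ 2) + (2 * |s| * ‖u‖ * (‖μ i‖ + 1) + ‖u‖ ^ 2 * s ^ 2
      + 2 * ‖μ i‖ ^ 2 + 2) / (2 * σ ^ 2) * (1 + ‖x‖ ^ 2) := by
      have := hψb
      nlinarith
  _ = _ := by ring

end IntegrabilityMix

section Steps

variable (σ : ℝ) (μ : Fin C → E d) (i : Fin C) (u : E d)

lemma measurable_log_term (s : ℝ) :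
    AEStronglyMeasurable (fun x => Real.log ((1 / C : ℝ) * PhiF σ μ i u x s))
      (mixture d C σ μ) :=
  (Real.measurable_log.comp
    (continuous_const.mul (cont_PhiF σ μ i u s)).measurable).aestronglyMeasurable

lemma hasDerivAt_popL (hC : 1 ≤ C) (hσ : 0 < σ) {s₀ : ℝ} (hs₀ : |s₀| < 1/2) :
    HasDerivAt
      (fun s => ∫ x, Real.log ((1 / C : ℝ) * PhiF σ μ i u x s) ∂(mixture d C σ μ))
      (∫ x, F1 σ μ i u x s₀ ∂(mixture d C σ μ)) s₀ := by
  have hC0 : 0 < C := hC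
  have key := hasDerivAt_integral_of_dominated_loc_of_deriv_le (μ := mixture d C σ μ)
    (x₀ := s₀)
    (F := fun s x => Real.log ((1 / C : ℝ) * PhiF σ μ i u x s))
    (F' := fun s x => F1 σ μ i u x s)
    (bound := B1 σ μ i u) (Metric.ball_mem_nhds s₀ (by norm_num : (0:ℝ) < 1/2))
    (Filter.Eventually.of_forall fun s => measurable_log_term σ μ i u s)
    (integrable_log_term σ μ i u hC hσ s₀)
    ((cont_F1 σ μ i u s₀).aestronglyMeasurable)
    (Filter.Eventually.of_forall fun x => fun s hs => by
      have h1 : |s - s₀| < 1/2 := by simpa [Real.dist_eq] using hs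
      have hs1 : |s| ≤ 1 := by
        have := abs_add_le s₀ (s - s₀)
        have h2 : s₀ + (s - s₀) = s := by ring
        rw [h2] at this
        linarith
      simpa [Real.norm_eq_abs] using abs_F1_le σ μ i u hσ x hs1)
    (integrable_B1 σ μ i u hσ)
    (Filter.Eventually.of_forall fun x => fun s _ =>
      hasDerivAt_log_term σ μ i u hC0 hσ x s)
  exact key.2

lemma hasDerivAt_intF1 (hC : 1 ≤ C) (hσ : 0 < σ) :
    HasDerivAt (fun s => ∫ x, F1 σ μ i u x s ∂(mixture d C σ μ))
      (∫ x, F2 σ μ i u x 0 ∂(mixture d C σ μ)) 0 := by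
  have key := hasDerivAt_integral_of_dominated_loc_of_deriv_le (μ := mixture d C σ μ)
    (x₀ := (0:ℝ))
    (F := fun s x => F1 σ μ i u x s)
    (F' := fun s x => F2 σ μ i u x s)
    (bound := B2 σ μ i u) (Metric.ball_mem_nhds (0:ℝ) (by norm_num : (0:ℝ) < 1/2))
    (Filter.Eventually.of_forall fun s => (cont_F1 σ μ i u s).aestronglyMeasurable)
    (Integrable.mono' (integrable_B1 σ μ i u hσ)
      (cont_F1 σ μ i u 0).aestronglyMeasurable
      (Filter.Eventually.of_forall fun x => by
        simpa [Real.norm_eq_abs] using abs_F1_le σ μ i u hσ x (by norm_num : |(0:ℝ)| ≤ 1)))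
    ((cont_F2 σ μ i u 0).aestronglyMeasurable)
    (Filter.Eventually.of_forall fun x => fun s hs => by
      have h1 : |s| < 1/2 := by simpa [Real.dist_eq] using hs
      simpa [Real.norm_eq_abs] using abs_F2_le σ μ i u hσ x (le_of_lt (by linarith : |s| < 1)))
    (integrable_B2 σ μ i u hσ)
    (Filter.Eventually.of_forall fun x => fun s _ => hasDerivAt_F1 σ μ i u hσ x s)
  exact key.2

lemma deriv_deriv_popL (hC : 1 ≤ C) (hσ : 0 < σ) :
    deriv (deriv fun s : ℝ => popL d C σ μ (Function.update μ i (μ i + s • u))) 0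
      = ∫ x, F2 σ μ i u x 0 ∂(mixture d C σ μ) := by
  have hfun : (fun s : ℝ => popL d C σ μ (Function.update μ i (μ i + s • u)))
      = fun s => ∫ x, Real.log ((1 / C : ℝ) * PhiF σ μ i u x s) ∂(mixture d C σ μ) :=
    funext fun s => popL_eq σ μ i u s
  rw [hfun]
  have hev : deriv (fun s => ∫ x, Real.log ((1 / C : ℝ) * PhiF σ μ i u x s)
        ∂(mixture d C σ μ))
      =ᶠ[nhds (0:ℝ)] fun s => ∫ x, F1 σ μ i u x s ∂(mixture d C σ μ) := by
    filter_upwards [Metric.ball_mem_nhds (0:ℝ) (by norm_num : (0:ℝ) < 1/2)] with s hs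
    have hs' : |s| < 1/2 := by simpa [Real.dist_eq] using hs
    exact (hasDerivAt_popL σ μ i u hC hσ hs').deriv
  rw [hev.deriv_eq]
  exact (hasDerivAt_intF1 σ μ i u hC hσ).deriv

end Steps

section Final

variable (σ : ℝ) (μ : Fin C → E d) (i : Fin C) (u : E d)

lemma integrable_inner_sq_gauss (b : ℝ) (hb : 0 < b) (v : E d) :
    Integrable (fun y : E d => ⟪v, y⟫ ^ 2 * rexp (-(b * ‖y‖ ^ 2))) := by
  apply Integrable.mono' (integrable_dbound 1 b hb v)
    (((cont_inner v).pow 2).mul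
      ((continuous_const.mul (continuous_norm.pow 2)).neg.rexp)).aestronglyMeasurable
  refine Filter.Eventually.of_forall fun y => ?_
  have := sq_mul_exp_le_dbound (t := 0) (by norm_num : |(0:ℝ)| ≤ 1) b v y
  simpa [Real.norm_eq_abs, zero_mul, zero_sub, neg_mul, abs_mul, Real.abs_exp, sq_abs]
    using this

lemma psiF_zero (x : E d) : psiF σ μ i u x 0 = -((2 * σ ^ 2)⁻¹ * ‖x - μ i‖ ^ 2) := by
  unfold psiF
  ring

lemma PhiF_zero_eq_sum (x : E d) :
    PhiF σ μ i u x 0 = ∑ j : Fin C, rexp (-‖x - μ j‖ ^ 2 / (2 * σ ^ 2)) := by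
  have h := sum_exp_eq σ μ i u x 0
  simp only [zero_smul, add_zero, Function.update_eq_self] at h
  exact h.symm

lemma dens_eq_PhiF (x : E d) :
    dens σ μ x = (1 / C : ℝ) * ((2 * π * σ ^ 2) ^ (-(d : ℝ) / 2) * PhiF σ μ i u x 0) := by
  unfold dens gaussPdf
  rw [PhiF_zero_eq_sum]
  simp [Finset.mul_sum]

lemma integral_F2_neg (hC : 1 ≤ C) (hσ : 0 < σ) (hu : u ≠ 0) :
    ∫ x, F2 σ μ i u x 0 ∂(mixture d C σ μ) < 0 := by
  have hb : (0:ℝ) < (2 * σ ^ 2)⁻¹ := by positivity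
  set b : ℝ := (2 * σ ^ 2)⁻¹ with hbdef
  set κ : ℝ := (2 * π * σ ^ 2) ^ (-(d : ℝ) / 2) with hκdef
  have hκ : 0 < κ := Real.rpow_pos_of_pos (by positivity) _
  set P : E d → ℝ := fun x => ⟪u, x - μ i⟫ ^ 2 * rexp (-(b * ‖x - μ i‖ ^ 2)) / σ ^ 4
    with hPdef
  set Q : E d → ℝ := fun x =>
    WF σ μ i u x 0 * (⟪u, x - μ i⟫ ^ 2 * rexp (-(b * ‖x - μ i‖ ^ 2))) / σ ^ 4 with hQdef
  set R : E d → ℝ := fun x => rexp (-(b * ‖x - μ i‖ ^ 2)) * (‖u‖ ^ 2 / σ ^ 2) with hRdef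
  -- pointwise identity
  have hpt : ∀ x, dens σ μ x * F2 σ μ i u x 0 = (1 / C : ℝ) * κ * (P x - Q x - R x) := by
    intro x
    have hψ := psiF_zero σ μ i u x
    rw [← hbdef] at hψ
    have hΦpos := PhiF_pos σ μ i u x 0
    have hΦne := ne_of_gt hΦpos
    rw [dens_eq_PhiF σ μ i u x, ← hκdef]
    unfold F2 WF vF aF
    rw [hψ, hPdef, hQdef, hRdef]
    simp only
    unfold WF
    rw [hψ]
    have hσne : σ ≠ 0 := ne_of_gt hσ
    field_simp
    ring
  -- integrability
  have hPg : Integrable (fun y : E d => ⟪u, y⟫ ^ 2 * rexp (-(b * ‖y‖ ^ 2)) / σ ^ 4) :=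
    (integrable_inner_sq_gauss b hb u).div_const _
  have hPint : Integrable P := by
    rw [hPdef]
    exact hPg.comp_sub_right (μ i)
  have hQnonneg : ∀ x, 0 ≤ Q x := by
    intro x
    rw [hQdef]
    have := (WF_pos σ μ i u x 0).le
    positivity
  have hQleP : ∀ x, Q x ≤ P x := by
    intro x
    rw [hQdef, hPdef]
    simp only
    have hW1 := WF_le_one σ μ i u x 0
    have hW0 := (WF_pos σ μ i u x 0).le
    have hnn : (0:ℝ) ≤ ⟪u, x - μ i⟫ ^ 2 * rexp (-(b * ‖x - μ i‖ ^ 2)) := by positivity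
    apply (div_le_div_iff_of_pos_right (by positivity : (0:ℝ) < σ ^ 4)).mpr
    nlinarith [mul_le_mul_of_nonneg_right hW1 hnn]
  have hQcont : Continuous Q := by
    rw [hQdef]
    exact (((cont_WF σ μ i u 0).mul
      (((continuous_const.inner (continuous_id.sub continuous_const)).pow 2).mul
        ((continuous_const.mul ((continuous_id.sub continuous_const).norm.pow 2)).neg.rexp))).div_const _)
  have hQint : Integrable Q := by
    apply Integrable.mono' hPint hQcont.aestronglyMeasurable
    refine Filter.Eventually.of_forall fun x => ?_
    rw [Real.norm_eq_abs, abs_of_nonneg (hQnonneg x)]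
    exact hQleP x
  have hRint : Integrable R := by
    rw [hRdef]
    have : Integrable (fun y : E d => rexp (-(b * ‖y‖ ^ 2)) * (‖u‖ ^ 2 / σ ^ 2)) := by
      apply Integrable.mul_const
      simpa [neg_mul] using integrable_gauss b hb
    exact this.comp_sub_right (μ i)
  -- integral values
  have hPval : ∫ x, P x = (π / b) ^ ((d : ℝ) / 2) * (‖u‖ ^ 2 / (2 * b)) / σ ^ 4 := by
    rw [hPdef]
    rw [integral_sub_right_eq_self
      (fun y : E d => ⟪u, y⟫ ^ 2 * rexp (-(b * ‖y‖ ^ 2)) / σ ^ 4) (μ i)]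
    rw [integral_div, second_moment b hb u]
  have hRval : ∫ x, R x = (π / b) ^ ((d : ℝ) / 2) * (‖u‖ ^ 2 / σ ^ 2) := by
    rw [hRdef]
    rw [integral_sub_right_eq_self
      (fun y : E d => rexp (-(b * ‖y‖ ^ 2)) * (‖u‖ ^ 2 / σ ^ 2)) (μ i)]
    rw [integral_mul_const]
    congr 1
    have := integral_gauss_norm (d := d) b hb
    simpa [neg_mul] using this
  have hPR : (∫ x, P x) - (∫ x, R x) = 0 := by
    rw [hPval, hRval, hbdef]
    field_simp
    ring
  -- positivity of ∫ Q
  have hQpos : 0 < ∫ x, Q x := by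
    rw [integral_pos_iff_support_of_nonneg hQnonneg hQint]
    have hsupp : Function.support Q = {x : E d | ⟪u, x - μ i⟫ ≠ 0} := by
      ext x
      simp only [Function.support, Set.mem_setOf_eq, hQdef]
      constructor
      · intro h hc
        apply h
        simp [hc]
      · intro h
        have hW := ne_of_gt (WF_pos σ μ i u x 0)
        have he := Real.exp_ne_zero (-(b * ‖x - μ i‖ ^ 2))
        have hsq : ⟪u, x - μ i⟫ ^ 2 ≠ 0 := pow_ne_zero 2 h
        exact div_ne_zero (mul_ne_zero hW (mul_ne_zero hsq he))
          (pow_ne_zero 4 (ne_of_gt hσ))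
    rw [hsupp]
    apply IsOpen.measure_pos
    · have hc : Continuous fun x : E d => ⟪u, x - μ i⟫ :=
        continuous_const.inner (continuous_id.sub continuous_const)
      exact IsOpen.preimage hc isOpen_ne
    · refine ⟨μ i + u, ?_⟩
      simp only [Set.mem_setOf_eq, add_sub_cancel_left]
      rw [real_inner_self_eq_norm_sq]
      exact pow_ne_zero 2 (norm_ne_zero_iff.mpr hu)
  -- assemble
  rw [integral_mixture σ μ]
  have h1 : (∫ x, dens σ μ x * F2 σ μ i u x 0)
      = ∫ x, (1 / C : ℝ) * κ * (P x - Q x - R x) := by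
    congr 1
    funext x
    exact hpt x
  have hPQ : Integrable (fun x => P x - Q x) volume := hPint.sub hQint
  rw [h1, integral_const_mul, integral_sub hPQ hRint, integral_sub hPint hQint]
  have hCpos : (0:ℝ) < 1 / C := by
    have : (0:ℝ) < (C:ℝ) := by exact_mod_cast hC
    positivity
  have : (∫ x, P x) - (∫ x, Q x) - (∫ x, R x) = -(∫ x, Q x) := by linarith [hPR]
  rw [this]
  have : (0:ℝ) < (1 / C : ℝ) * κ := by positivity
  nlinarith [hQpos]

end Final

end HessianProof

/-- Lemma 2 of the paper: negative definiteness of each Hessian block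
of L at the true means. -/
theorem hessian_block_negative_definite
    (d C : ℕ) (hd : 1 ≤ d) (hC : 2 ≤ C) (σ : ℝ) (hσ : 0 < σ)
    (μ : Fin C → E d) (i : Fin C) (u : E d) (hu : u ≠ 0) :
    deriv (deriv fun s : ℝ =>
        popL d C σ μ (Function.update μ i (μ i + s • u))) 0 < 0 := by
  have hC1 : 1 ≤ C := by omega
  rw [HessianProof.deriv_deriv_popL σ μ i u hC1 hσ]
  exact HessianProof.integral_F2_neg σ μ i u hC1 hσ hu

end
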